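/- Let k₁ > 1 > k₂ > 0 with k₁ + k₂ = 2, both sufficiently close to 1. Then there exist t₁, t₂ > 0 with t₁ + t₂ = π/2 such that the π-periodic step function taking values k₁, k₂, k₁, k₂ on consecutive intervals of lengths t₁, t₂, t₁, t₂ is the potential of a closed centrally symmetric curve; equivalently, e^{t₁A} e^{t₂B} e^{t₁A} e^{t₂B} = −E, where A = [[0,−k₁],[1,0]], B = [[0,−k₂],[1,0]], and E is the identity matrix. -/

import Mathlib

open Real

lemma matrix_sq_eq_neg_one (p q r : ℝ) (h : -(p * p) - q * r = 1) :
    !![p, q; r, -p] * !![p, q; r, -p] = -(1 : Matrix (Fin 2) (Fin 2) ℝ) := by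
  ext i j
  fin_cases i <;> fin_cases j <;>
    simp [Matrix.mul_apply, Fin.sum_univ_two, Matrix.one_apply] <;> nlinarith [h]

lemma exp_mat (k t : ℝ) (hk : 0 < k) :
    NormedSpace.exp (t • !![0, -k; 1, 0]) =
    !![Real.cos (Real.sqrt k * t), -(Real.sqrt k * Real.sin (Real.sqrt k * t));
       Real.sin (Real.sqrt k * t) / Real.sqrt k, Real.cos (Real.sqrt k * t)] := by
  letI : SeminormedRing (Matrix (Fin 2) (Fin 2) ℝ) := Matrix.linftyOpSemiNormedRing
  letI : NormedRing (Matrix (Fin 2) (Fin 2) ℝ) := Matrix.linftyOpNormedRing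
  letI : NormedAlgebra ℝ (Matrix (Fin 2) (Fin 2) ℝ) := Matrix.linftyOpNormedAlgebra
  set a := Real.sqrt k with ha
  have ha0 : 0 < a := Real.sqrt_pos.mpr hk
  have ha2 : a * a = k := Real.mul_self_sqrt hk.le
  set J : Matrix (Fin 2) (Fin 2) ℝ := a⁻¹ • !![0, -k; 1, 0] with hJdef
  have hJ2 : J * J = -1 := by
    ext i j
    fin_cases i <;> fin_cases j <;>
      simp [hJdef, Matrix.mul_apply, Fin.sum_univ_two, Matrix.one_apply] <;>
      field_simp <;> nlinarith
  set φ : ℂ →ₐ[ℝ] Matrix (Fin 2) (Fin 2) ℝ := Complex.liftAux J hJ2 with hφ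
  have hφc : Continuous φ := φ.toLinearMap.continuous_of_finiteDimensional
  have key : t • !![0, -k; 1, 0] = φ (((a * t : ℝ) : ℂ) * Complex.I) := by
    rw [hφ, Complex.liftAux_apply]
    ext i j
    fin_cases i <;> fin_cases j <;>
      simp [hJdef, Matrix.algebraMap_matrix_apply] <;> field_simp <;> ring
  rw [key]; erw [← NormedSpace.map_exp φ hφc]
  have h1 : NormedSpace.exp (((a * t : ℝ) : ℂ) * Complex.I)
      = Complex.exp (((a * t : ℝ) : ℂ) * Complex.I) := by
    rw [← Complex.exp_eq_exp_ℂ]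
  rw [h1, Complex.exp_mul_I, ← Complex.ofReal_cos, ← Complex.ofReal_sin, hφ,
    Complex.liftAux_apply]
  ext i j
  fin_cases i <;> fin_cases j <;>
    simp [hJdef, Matrix.algebraMap_matrix_apply, ← Complex.ofReal_mul,
      ← Complex.ofReal_cos, ← Complex.ofReal_sin] <;>
    (try field_simp) <;> (try ring) <;>
    linear_combination (-(Real.sin (a * t))) * ha2

lemma prod4 (a b c₁ s₁ c₂ s₂ : ℝ) (ha : 0 < a) (hb : 0 < b)
    (h1 : c₁ ^ 2 + s₁ ^ 2 = 1) (h2 : c₂ ^ 2 + s₂ ^ 2 = 1)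
    (htr : 2 * a * b * (c₁ * c₂) = (a ^ 2 + b ^ 2) * (s₁ * s₂)) :
    !![c₁, -(a * s₁); s₁ / a, c₁] * !![c₂, -(b * s₂); s₂ / b, c₂] *
      !![c₁, -(a * s₁); s₁ / a, c₁] * !![c₂, -(b * s₂); s₂ / b, c₂] =
    -(1 : Matrix (Fin 2) (Fin 2) ℝ) := by
  have hM : !![c₁, -(a * s₁); s₁ / a, c₁] * !![c₂, -(b * s₂); s₂ / b, c₂]
      = !![c₁ * c₂ - a * s₁ * s₂ / b, -(c₁ * (b * s₂)) - a * s₁ * c₂;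
           s₁ * c₂ / a + c₁ * s₂ / b, -(c₁ * c₂ - a * s₁ * s₂ / b)] := by
    ext i j
    fin_cases i <;> fin_cases j <;>
      (try simp [Matrix.mul_apply, Fin.sum_univ_two]) <;>
      (try field_simp) <;> (try ring) <;> nlinarith [htr]
  have hdet : -((c₁ * c₂ - a * s₁ * s₂ / b) * (c₁ * c₂ - a * s₁ * s₂ / b))
      - (-(c₁ * (b * s₂)) - a * s₁ * c₂) * (s₁ * c₂ / a + c₁ * s₂ / b) = 1 := by
    have hs : -(c₁ * c₂ - a * s₁ * s₂ / b) = c₁ * c₂ - b * s₁ * s₂ / a := by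
      field_simp
      nlinarith [htr]
    rw [show -((c₁ * c₂ - a * s₁ * s₂ / b) * (c₁ * c₂ - a * s₁ * s₂ / b))
        = (c₁ * c₂ - a * s₁ * s₂ / b) * (-(c₁ * c₂ - a * s₁ * s₂ / b)) by ring, hs]
    have key : (c₁ * c₂ - a * s₁ * s₂ / b) * (c₁ * c₂ - b * s₁ * s₂ / a)
        - (-(c₁ * (b * s₂)) - a * s₁ * c₂) * (s₁ * c₂ / a + c₁ * s₂ / b)
        = (c₁ ^ 2 + s₁ ^ 2) * (c₂ ^ 2 + s₂ ^ 2) := by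
      field_simp
      ring
    rw [key, h1, h2, one_mul]
  rw [mul_assoc, hM, matrix_sq_eq_neg_one _ _ _ hdet]

/-- For `k₁ > 1 > k₂ > 0` with `k₁ + k₂ = 2`, both sufficiently close to `1`, there are
`t₁, t₂ > 0` with `t₁ + t₂ = π/2` such that the monodromy condition
`e^{t₁A} e^{t₂B} e^{t₁A} e^{t₂B} = -E` holds, where `A = [[0,-k₁],[1,0]]`,
`B = [[0,-k₂],[1,0]]`; i.e. the corresponding `π`-periodic `4`-step potential with
values `k₁, k₂, k₁, k₂` yields a closed centrally symmetric curve. -/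
theorem exists_closed_step_potential :
    ∃ ε > (0 : ℝ), ∀ k₁ k₂ : ℝ, 1 < k₁ → 0 < k₂ → k₂ < 1 → k₁ + k₂ = 2 →
      |k₁ - 1| < ε → |k₂ - 1| < ε →
      ∃ t₁ t₂ : ℝ, 0 < t₁ ∧ 0 < t₂ ∧ t₁ + t₂ = π / 2 ∧
        NormedSpace.exp (t₁ • !![0, -k₁; 1, 0]) *
          NormedSpace.exp (t₂ • !![0, -k₂; 1, 0]) *
          NormedSpace.exp (t₁ • !![0, -k₁; 1, 0]) *
          NormedSpace.exp (t₂ • !![0, -k₂; 1, 0]) =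
        -(1 : Matrix (Fin 2) (Fin 2) ℝ) := by
  refine ⟨1, one_pos, ?_⟩
  intro k₁ k₂ hk₁ hk₂ hk₂1 hsum _ _
  have hk₁0 : 0 < k₁ := lt_trans one_pos hk₁
  set a := Real.sqrt k₁ with hadef
  set b := Real.sqrt k₂ with hbdef
  have ha0 : 0 < a := Real.sqrt_pos.mpr hk₁0
  have hb0 : 0 < b := Real.sqrt_pos.mpr hk₂
  have ha2 : a * a = k₁ := Real.mul_self_sqrt hk₁0.le
  have hb2 : b * b = k₂ := Real.mul_self_sqrt hk₂.le
  have ha1 : 1 < a := by nlinarith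
  have hb1 : b < 1 := by nlinarith
  have ha3 : a < 2 := by nlinarith
  have hpi := Real.pi_pos
  set g : ℝ → ℝ := fun t => 2 * a * b * (Real.cos (a * t) * Real.cos (b * (π / 2 - t)))
    - (a ^ 2 + b ^ 2) * (Real.sin (a * t) * Real.sin (b * (π / 2 - t))) with hgdef
  have hgc : Continuous g := by fun_prop
  have hg0 : 0 < g 0 := by
    have h1 : Real.cos (b * (π / 2 - 0)) > 0 := by
      apply Real.cos_pos_of_mem_Ioo
      constructor <;> [nlinarith; nlinarith]
    have h2 : g 0 = 2 * a * b * Real.cos (b * (π / 2 - 0)) := by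
      simp [hgdef]
    rw [h2]
    have := mul_pos (mul_pos (mul_pos two_pos ha0) hb0) h1
    linarith
  have hgp : g (π / 2) < 0 := by
    have h1 : Real.cos (a * (π / 2)) < 0 := by
      apply Real.cos_neg_of_pi_div_two_lt_of_lt <;> nlinarith
    have h2 : g (π / 2) = 2 * a * b * Real.cos (a * (π / 2)) := by
      simp [hgdef]
    rw [h2]
    have := mul_neg_of_pos_of_neg (mul_pos (mul_pos two_pos ha0) hb0) h1
    linarith
  have hsub : Set.Ioo (g (π / 2)) (g 0) ⊆ g '' Set.Ioo 0 (π / 2) :=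
    intermediate_value_Ioo' (by linarith) hgc.continuousOn
  obtain ⟨t₁, ht₁mem, ht₁⟩ := hsub ⟨hgp, hg0⟩
  obtain ⟨ht₁0, ht₁p⟩ := ht₁mem
  refine ⟨t₁, π / 2 - t₁, ht₁0, by linarith, by ring, ?_⟩
  rw [exp_mat k₁ t₁ hk₁0, exp_mat k₂ (π / 2 - t₁) hk₂]
  rw [← hadef, ← hbdef]
  apply prod4 a b _ _ _ _ ha0 hb0 (Real.cos_sq_add_sin_sq _) (Real.cos_sq_add_sin_sq _)
  have := ht₁
  rw [hgdef] at this
  simp only [] at this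
  nlinarith [this]
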